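/- Let p be a prime, F a field of characteristic p, g a Lie algebra over F, t an integer with 1 ≤ t ≤ p, elements a₁, ..., a_t ∈ g, and positive integers r₁, ..., r_t with r₁ + ⋯ + r_t = p. Let T(r₁,...,r_t) be the set of maps τ: {1,...,p} → {1,...,t} taking each value i exactly r_i times. Then in U(g): r₁ · Σ_{τ ∈ T} a_{τ(1)} a_{τ(2)} ⋯ a_{τ(p)} = Σ_{τ ∈ T, τ(1)=1} [[⋯[[a_{τ(1)}, a_{τ(2)}], a_{τ(3)}], ⋯], a_{τ(p)}]. -/

import Mathlib

open UniversalEnvelopingAlgebra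

attribute [local instance 100] LieRing.ofAssociativeRing

/-- The left-nested iterated Lie bracket `[[⋯[[x₁,x₂],x₃],⋯],x_r]` of a list
`[x₁, …, x_r]` (and `0` for the empty list). -/
def nestedBracket {L : Type*} [LieRing L] : List L → L
  | [] => 0
  | x :: xs => xs.foldl (fun u v => ⁅u, v⁆) x

section Aux

variable {A : Type*} [Ring A]

/-- left word: product of `b i` over `i` with `g i = true`, in descending order. -/
def LwD {n : ℕ} (b : Fin n → A) (g : Fin n → Bool) : A :=
  ((((List.finRange n).filter (fun i => g i)).reverse).map b).prod

def RwD {n : ℕ} (b : Fin n → A) (g : Fin n → Bool) : A :=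
  (((List.finRange n).filter (fun i => !g i)).map b).prod

def ctD {n : ℕ} (g : Fin n → Bool) : ℕ := ((List.finRange n).filter (fun i => g i)).length

theorem expandNested : ∀ (n : ℕ) (b : Fin n → A) (c : A),
    (List.ofFn b).foldl (fun u v => u * v - v * u) c
      = ∑ g : Fin n → Bool, (-1 : A) ^ (ctD g) * (LwD b g * (c * RwD b g))
  | 0, b, c => by
      simp [List.ofFn_zero, LwD, RwD, ctD, List.finRange]
  | (n+1), b, c => by
      rw [List.ofFn_succ, List.foldl_cons,
        expandNested n (fun i => b i.succ) (c * b 0 - b 0 * c),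
        ← (Fin.consEquiv (fun _ : Fin (n+1) => Bool)).sum_comp
          (fun g => (-1 : A) ^ (ctD g) * (LwD b g * (c * RwD b g)))]
      rw [Fintype.sum_prod_type]
      rw [Fintype.sum_bool]
      rw [← Finset.sum_add_distrib]
      refine Finset.sum_congr rfl fun g' _ => ?_
      have hfil : ∀ b0 : Bool, (List.finRange (n+1)).filter
            (fun i => (Fin.consEquiv (fun _ : Fin (n+1) => Bool) (b0, g')) i)
          = (if b0 then [(0 : Fin (n+1))] else [])
            ++ ((List.finRange n).filter (fun i => g' i)).map Fin.succ := by
        intro b0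
        rw [List.finRange_succ, List.filter_cons, List.filter_map]
        simp [Fin.consEquiv, Function.comp_def]
        cases b0 <;> simp
      have hfiln : ∀ b0 : Bool, (List.finRange (n+1)).filter
            (fun i => !(Fin.consEquiv (fun _ : Fin (n+1) => Bool) (b0, g')) i)
          = (if b0 then [] else [(0 : Fin (n+1))])
            ++ ((List.finRange n).filter (fun i => !g' i)).map Fin.succ := by
        intro b0
        rw [List.finRange_succ, List.filter_cons, List.filter_map]
        simp [Fin.consEquiv, Function.comp_def]
        cases b0 <;> simp
      have hL : ∀ b0, LwD b (Fin.consEquiv (fun _ : Fin (n+1) => Bool) (b0, g'))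
          = (if b0 then LwD (fun i => b i.succ) g' * b 0 else LwD (fun i => b i.succ) g') := by
        intro b0
        rw [LwD, hfil]
        cases b0 <;> simp [LwD, List.map_map, Function.comp_def]
      have hR : ∀ b0, RwD b (Fin.consEquiv (fun _ : Fin (n+1) => Bool) (b0, g'))
          = (if b0 then RwD (fun i => b i.succ) g' else b 0 * RwD (fun i => b i.succ) g') := by
        intro b0
        rw [RwD, hfiln]
        cases b0 <;> simp [RwD, List.map_map, Function.comp_def]
      have hc : ∀ b0, ctD (Fin.consEquiv (fun _ : Fin (n+1) => Bool) (b0, g'))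
          = (if b0 then ctD g' + 1 else ctD g') := by
        intro b0
        rw [ctD, hfil]
        cases b0 <;> simp [ctD, Nat.add_comm]
      rw [hL true, hL false, hR true, hR false, hc true, hc false]
      simp only [if_true, if_false, pow_succ]
      noncomm_ring
      exact add_comm _ _

def Jl (n : ℕ) (g : Fin n → Bool) : List (Fin (n+1)) :=
  (((List.finRange n).filter (fun i => g i)).reverse.map Fin.succ)
    ++ (0 : Fin (n+1)) :: (((List.finRange n).filter (fun i => !g i)).map Fin.succ)

theorem Jl_perm (n : ℕ) (g : Fin n → Bool) : (Jl n g).Perm (List.finRange (n+1)) := by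
  refine (List.perm_middle).trans ?_
  rw [List.finRange_succ]
  refine List.Perm.cons _ ?_
  rw [← List.map_append]
  refine List.Perm.map _ ?_
  exact (List.reverse_perm _).append_right _ |>.trans (List.filter_append_perm _ _)

theorem Jl_length (n : ℕ) (g : Fin n → Bool) : (Jl n g).length = n + 1 := by
  rw [(Jl_perm n g).length_eq, List.length_finRange]

theorem Jl_nodup (n : ℕ) (g : Fin n → Bool) : (Jl n g).Nodup :=
  (Jl_perm n g).nodup_iff.2 (List.nodup_finRange _)

theorem Jl_mem (n : ℕ) (g : Fin n → Bool) (x : Fin (n+1)) : x ∈ Jl n g :=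
  (Jl_perm n g).mem_iff.2 (List.mem_finRange x)

theorem ctD_le {n : ℕ} (g : Fin n → Bool) : ctD g ≤ n :=
  le_trans (List.length_filter_le _ _) (le_of_eq (List.length_finRange (n := n)))

theorem Jl_getElem_ct (n : ℕ) (g : Fin n → Bool) (h : ctD g < (Jl n g).length) :
    (Jl n g)[ctD g] = 0 := by
  have hlen : (((List.finRange n).filter (fun i => g i)).reverse.map Fin.succ).length
      = ctD g := by simp [ctD]
  unfold Jl
  exact (List.getElem_append_right (Nat.le_of_eq hlen) (h₂ := h)).trans (by simp [ctD])

noncomputable def eJ (n : ℕ) (g : Fin n → Bool) : Fin (n+1) ≃ Fin (n+1) :=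
  (finCongr (Jl_length n g).symm).trans
    ((Jl_nodup n g).getEquivOfForallMemList (Jl n g) (Jl_mem n g))

theorem eJ_ct (n : ℕ) (g : Fin n → Bool) :
    eJ n g ⟨ctD g, Nat.lt_succ_of_le (ctD_le g)⟩ = 0 := by
  show (Jl n g).get _ = 0
  exact Jl_getElem_ct n g _

theorem eJ_prod (n : ℕ) (g : Fin n → Bool) (f : Fin (n+1) → A) :
    LwD (fun i => f i.succ) g * (f 0 * RwD (fun i => f i.succ) g)
      = (List.ofFn (fun j => f (eJ n g j))).prod := by
  have h1 : (List.ofFn (fun j => f (eJ n g j))) = (Jl n g).map f := by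
    rw [List.ofFn_congr (Jl_length n g).symm]
    conv_rhs => rw [← List.ofFn_get (Jl n g), List.map_ofFn]
    rfl
  rw [h1]
  unfold Jl
  rw [List.map_append, List.map_cons, List.prod_append, List.prod_cons,
    List.map_map, List.map_map]
  rfl

theorem card_filter_comp_equiv {m : ℕ} {β : Type*} [DecidableEq β]
    (e : Fin m ≃ Fin m) (f : Fin m → β) (x : β) :
    (Finset.univ.filter fun j => f (e j) = x).card
      = (Finset.univ.filter fun j => f j = x).card := by
  refine Finset.card_bij (fun j _ => e j) ?_ ?_ ?_
  · intro j hj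
    simpa using (Finset.mem_filter.1 hj).2
  · intro j1 _ j2 _ h
    exact e.injective h
  · intro b hb
    exact ⟨e.symm b, by simpa using (Finset.mem_filter.1 hb).2, by simp⟩

theorem ctD_eq_card {n : ℕ} (g : Fin n → Bool) :
    ctD g = (Finset.univ.filter fun i => g i = true).card := by
  rw [ctD, ← List.toFinset_card_of_nodup (List.Nodup.filter _ (List.nodup_finRange n)),
    List.toFinset_filter, List.toFinset_finRange]

theorem card_ctD_eq (n m : ℕ) :
    (Finset.univ.filter fun g : Fin n → Bool => ctD g = m).card = n.choose m := by
  have : (Finset.univ.filter fun g : Fin n → Bool => ctD g = m).card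
      = (Finset.powersetCard m (Finset.univ : Finset (Fin n))).card := by
    refine Finset.card_bij' (fun g _ => Finset.univ.filter fun i => g i = true)
      (fun S _ => fun i => decide (i ∈ S)) ?_ ?_ ?_ ?_
    · intro g hg
      rw [Finset.mem_powersetCard]
      exact ⟨Finset.filter_subset _ _, by
        rw [← ctD_eq_card]; exact (Finset.mem_filter.1 hg).2⟩
    · intro S hS
      rw [Finset.mem_filter]
      refine ⟨Finset.mem_univ _, ?_⟩
      rw [ctD_eq_card]
      have : (Finset.univ.filter fun i => decide (i ∈ S) = true) = S := by
        ext i; simp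
      rw [this]
      exact (Finset.mem_powersetCard.1 hS).2
    · intro g _
      funext i
      by_cases h : g i = true <;> simp [h]
    · intro S _
      ext i; simp
  rw [this, Finset.card_powersetCard]
  simp

end Aux

theorem choose_neg_one_pow (p : ℕ) (hp : p.Prime) (F : Type*) [Field F] [CharP F p] :
    ∀ k ≤ p - 1, ((p - 1).choose k : F) = (-1) ^ k := by
  intro k
  induction k with
  | zero => simp
  | succ k ih =>
    intro hk
    obtain ⟨n, hn⟩ : ∃ n, p = n + 1 := ⟨p - 1, (Nat.succ_pred_eq_of_pos hp.pos).symm⟩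
    have hn' : p - 1 = n := by omega
    have hdvd : p ∣ p.choose (k+1) :=
      Nat.Prime.dvd_choose_self hp (Nat.succ_ne_zero k) (by omega)
    obtain ⟨m, hm⟩ := hdvd
    have hpascal : (p-1).choose k + (p-1).choose (k+1) = p.choose (k+1) := by
      rw [hn', hn]
      exact (Nat.choose_succ_succ n k).symm
    have hcast : ((p-1).choose k : F) + ((p-1).choose (k+1) : F) = 0 := by
      have := congrArg (fun x : ℕ => (x : F)) hpascal
      simp only [Nat.cast_add] at this
      rw [this, hm, Nat.cast_mul, CharP.cast_eq_zero F p, zero_mul]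
    have ihk : ((p-1).choose k : F) = (-1) ^ k := ih (by omega)
    rw [ihk] at hcast
    rw [pow_succ]
    linear_combination hcast

theorem statement7 (p : ℕ) (hp : p.Prime) (F : Type*) [Field F] [CharP F p]
    (g : Type*) [LieRing g] [LieAlgebra F g] (t : ℕ) (ht : 0 < t) (htp : t ≤ p)
    (a : Fin t → g) (r : Fin t → ℕ) (hr : ∀ i, 0 < r i)
    (hsum : ∑ i, r i = p) :
    r ⟨0, ht⟩ •
        ∑ τ ∈ Finset.univ.filter (fun τ : Fin p → Fin t =>
            ∀ i : Fin t, (Finset.univ.filter fun j : Fin p => τ j = i).card = r i),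
          (List.ofFn fun j => (ι F : g →ₗ⁅F⁆ UniversalEnvelopingAlgebra F g)
            (a (τ j))).prod =
      ∑ τ ∈ Finset.univ.filter (fun τ : Fin p → Fin t =>
          (∀ i : Fin t,
            (Finset.univ.filter fun j : Fin p => τ j = i).card = r i) ∧
          τ ⟨0, hp.pos⟩ = ⟨0, ht⟩),
        (ι F : g →ₗ⁅F⁆ UniversalEnvelopingAlgebra F g)
          (nestedBracket (List.ofFn fun j => a (τ j))) := by
  classical
  have hchoose := choose_neg_one_pow p hp F
  obtain ⟨n, rfl⟩ : ∃ n, p = n + 1 := ⟨p - 1, (Nat.succ_pred_eq_of_pos hp.pos).symm⟩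
  set U := UniversalEnvelopingAlgebra F g with hU
  set I : g →ₗ⁅F⁆ U := ι F with hI
  set z : Fin t := ⟨0, ht⟩ with hz
  set Pr : (Fin (n+1) → Fin t) → U := fun τ => (List.ofFn fun j => I (a (τ j))).prod with hPr
  set P : (Fin (n+1) → Fin t) → Prop := fun τ =>
    ∀ i, (Finset.univ.filter fun j => τ j = i).card = r i with hP
  set S : Fin (n+1) → U := fun k =>
    ∑ τ ∈ Finset.univ.filter (fun τ => P τ ∧ τ k = z), Pr τ with hS
  -- Step 1 : LHS = ∑ k, S k
  have step1 : (r z • ∑ τ ∈ Finset.univ.filter P, Pr τ) = ∑ k : Fin (n+1), S k := by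
    rw [Finset.smul_sum]
    have h1 : ∀ τ ∈ Finset.univ.filter P, r z • Pr τ
        = ∑ j : Fin (n+1), if τ j = z then Pr τ else 0 := by
      intro τ hτ
      rw [← Finset.sum_filter, Finset.sum_const, ((Finset.mem_filter.1 hτ).2 z)]
    rw [Finset.sum_congr rfl h1, Finset.sum_comm]
    refine Finset.sum_congr rfl fun j _ => ?_
    rw [← Finset.sum_filter, Finset.filter_filter]
  -- Step 2 : RHS = ∑ g, (-1)^ctD g * S ⟨ctD g, _⟩
  have map_foldl : ∀ (l : List g) (x : g),
      I (l.foldl (fun u v => ⁅u, v⁆) x)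
        = (l.map I).foldl (fun u v : U => u * v - v * u) (I x) := by
    intro l
    induction l with
    | nil => intro x; rfl
    | cons y l ih =>
      intro x
      rw [List.foldl_cons, List.map_cons, List.foldl_cons, ih, LieHom.map_lie,
        Ring.lie_def]
  have step2 : ∑ τ ∈ Finset.univ.filter (fun τ : Fin (n+1) → Fin t => P τ ∧ τ ⟨0, hp.pos⟩ = z),
        I (nestedBracket (List.ofFn fun j => a (τ j)))
      = ∑ g0 : Fin n → Bool, (-1 : U) ^ (ctD g0)
          * S ⟨ctD g0, Nat.lt_succ_of_le (ctD_le g0)⟩ := by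
    have hterm : ∀ τ : Fin (n+1) → Fin t,
        I (nestedBracket (List.ofFn fun j => a (τ j)))
          = ∑ g0 : Fin n → Bool, (-1 : U) ^ (ctD g0) * Pr (τ ∘ eJ n g0) := by
      intro τ
      have h0 : (List.ofFn fun j => a (τ j))
          = a (τ 0) :: List.ofFn (fun j : Fin n => a (τ j.succ)) := by
        rw [List.ofFn_succ]
      rw [h0]
      show I ((List.ofFn (fun j : Fin n => a (τ j.succ))).foldl _ _) = _
      rw [map_foldl, List.map_ofFn]
      simp only [Function.comp_def]
      rw [expandNested n (fun j : Fin n => I (a (τ j.succ))) (I (a (τ 0)))]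
      refine Finset.sum_congr rfl fun g0 _ => ?_
      congr 1
      exact eJ_prod n g0 (fun j => I (a (τ j)))
    have h2 : ∀ g0 : Fin n → Bool,
        ∑ τ ∈ Finset.univ.filter (fun τ : Fin (n+1) → Fin t => P τ ∧ τ ⟨0, hp.pos⟩ = z),
          Pr (τ ∘ eJ n g0)
        = S ⟨ctD g0, Nat.lt_succ_of_le (ctD_le g0)⟩ := by
      intro g0
      rw [hS]
      refine Finset.sum_nbij' (fun τ => τ ∘ eJ n g0) (fun τ => τ ∘ (eJ n g0).symm)
        ?_ ?_ ?_ ?_ ?_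
      · intro τ hτ
        obtain ⟨hP1, hP2⟩ := (Finset.mem_filter.1 hτ).2
        refine Finset.mem_filter.2 ⟨Finset.mem_univ _, ⟨fun i => ?_, ?_⟩⟩
        · show (Finset.univ.filter fun j => τ (eJ n g0 j) = i).card = r i
          rw [card_filter_comp_equiv (eJ n g0) τ i]
          exact hP1 i
        · show τ (eJ n g0 _) = z
          rw [eJ_ct n g0]
          exact hP2
      · intro τ hτ
        obtain ⟨hP1, hP2⟩ := (Finset.mem_filter.1 hτ).2
        refine Finset.mem_filter.2 ⟨Finset.mem_univ _, ⟨fun i => ?_, ?_⟩⟩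
        · show (Finset.univ.filter fun j => τ ((eJ n g0).symm j) = i).card = r i
          rw [card_filter_comp_equiv (eJ n g0).symm τ i]
          exact hP1 i
        · show τ ((eJ n g0).symm _) = z
          have h0 : (eJ n g0).symm ⟨(0:ℕ), hp.pos⟩ = ⟨ctD g0, Nat.lt_succ_of_le (ctD_le g0)⟩ := by
            rw [Equiv.symm_apply_eq, eJ_ct n g0]
            rfl
          rw [h0]
          exact hP2
      · intro τ _; funext j; simp
      · intro τ _; funext j; simp
      · intro τ _; rfl
    rw [Finset.sum_congr rfl fun τ _ => hterm τ, Finset.sum_comm]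
    refine Finset.sum_congr rfl fun g0 _ => ?_
    rw [← Finset.mul_sum, h2 g0]
  -- Step 3 : regroup by ctD and use the binomial congruence
  rw [step1, step2]
  rw [← Finset.sum_fiberwise Finset.univ
    (fun g0 : Fin n → Bool => (⟨ctD g0, Nat.lt_succ_of_le (ctD_le g0)⟩ : Fin (n+1)))
    (fun g0 => (-1 : U) ^ (ctD g0) * S ⟨ctD g0, Nat.lt_succ_of_le (ctD_le g0)⟩)]
  refine Finset.sum_congr rfl fun k _ => ?_
  have hterm : ∀ g0 ∈ Finset.univ.filter (fun g0 : Fin n → Bool =>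
      (⟨ctD g0, Nat.lt_succ_of_le (ctD_le g0)⟩ : Fin (n+1)) = k),
      (-1 : U) ^ (ctD g0) * S ⟨ctD g0, Nat.lt_succ_of_le (ctD_le g0)⟩
        = (-1 : U) ^ (k : ℕ) * S k := by
    intro g0 hg0
    have := (Finset.mem_filter.1 hg0).2
    rw [← this]
  rw [Finset.sum_congr rfl hterm, Finset.sum_const]
  have hcard : (Finset.univ.filter (fun g0 : Fin n → Bool =>
      (⟨ctD g0, Nat.lt_succ_of_le (ctD_le g0)⟩ : Fin (n+1)) = k)).card = n.choose (k : ℕ) := by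
    rw [← card_ctD_eq n (k : ℕ)]
    refine Finset.card_bij (fun g0 _ => g0) ?_ (fun _ _ _ _ h => h) ?_
    · intro g0 hg0
      refine Finset.mem_filter.2 ⟨Finset.mem_univ _, ?_⟩
      have := (Finset.mem_filter.1 hg0).2
      have := congrArg (Fin.val) this
      simpa using this
    · intro g0 hg0
      refine ⟨g0, Finset.mem_filter.2 ⟨Finset.mem_univ _, ?_⟩, rfl⟩
      have := (Finset.mem_filter.1 hg0).2
      exact Fin.ext (by simpa using this)
  rw [hcard, nsmul_eq_mul]
  have hcoef : ((n.choose (k : ℕ) : U)) * (-1 : U) ^ (k : ℕ) = 1 := by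
    have h1 : ((n.choose (k : ℕ) : F)) = (-1 : F) ^ (k : ℕ) := by
      have := hchoose (k : ℕ) (by omega)
      simpa using this
    have h2 : ((n.choose (k : ℕ) : U)) = algebraMap F U ((n.choose (k : ℕ) : F)) := by
      rw [map_natCast]
    rw [h2, h1, map_pow, map_neg, map_one, ← pow_add]
    exact Even.neg_one_pow ⟨(k : ℕ), rfl⟩
  rw [← mul_assoc, hcoef, one_mul]
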